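/- Let F be a nonempty compact convex subset of ℝⁿ. Then the set of vectors c ∈ ℝⁿ for which the linear functional x ↦ ⟨c, x⟩ has a unique maximizer over F has full Lebesgue measure in ℝⁿ (its complement is Lebesgue null). -/

import Mathlib

open MeasureTheory

/-- For a nonempty compact convex set `F ⊆ ℝⁿ`, the set of vectors `c` whose linear
functional `x ↦ ⟪c, x⟫` has a unique maximizer over `F` has full Lebesgue measure:
its complement is Lebesgue null. -/
theorem unique_maximizer_full_measure (n : ℕ)
    (F : Set (EuclideanSpace ℝ (Fin n)))
    (hne : F.Nonempty) (hcomp : IsCompact F) (hconv : Convex ℝ F) :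
    volume {c : EuclideanSpace ℝ (Fin n) |
      ∃! x, x ∈ F ∧ ∀ y ∈ F, (inner ℝ c y : ℝ) ≤ inner ℝ c x}ᶜ = 0 := by
  classical
  obtain ⟨R, hR⟩ := isBounded_iff_forall_norm_le.1 hcomp.isBounded
  have hR0 : 0 ≤ R := le_trans (norm_nonneg _) (hR _ hne.choose_spec)
  set h : EuclideanSpace ℝ (Fin n) → ℝ := fun c => sSup ((fun x => (inner ℝ c x : ℝ)) '' F) with hh
  -- for each c, a maximizer exists and h c equals the max value
  have hmax : ∀ c : EuclideanSpace ℝ (Fin n), ∃ x ∈ F, (∀ y ∈ F, (inner ℝ c y : ℝ) ≤ inner ℝ c x) ∧ h c = inner ℝ c x := by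
    intro c
    obtain ⟨x, hxF, hx⟩ := hcomp.exists_isMaxOn (f := fun y => (inner ℝ c y : ℝ)) hne
      ((continuous_const.inner continuous_id).continuousOn)
    refine ⟨x, hxF, fun y hy => hx hy, ?_⟩
    refine IsGreatest.csSup_eq ⟨⟨x, hxF, rfl⟩, ?_⟩
    rintro - ⟨y, hyF, rfl⟩
    exact hx hyF
  have hub : ∀ (c : EuclideanSpace ℝ (Fin n)) (x), x ∈ F → (inner ℝ c x : ℝ) ≤ h c := by
    intro c x hx
    obtain ⟨z, hzF, hz, hcz⟩ := hmax c
    rw [hcz]; exact hz x hx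
  -- Lipschitz
  have hlip : LipschitzWith (Real.toNNReal R) h := by
    have key : ∀ c c' : EuclideanSpace ℝ (Fin n), h c ≤ h c' + R * ‖c - c'‖ := by
      intro c c'
      obtain ⟨x, hxF, hx, hcx⟩ := hmax c
      rw [hcx]
      have : (inner ℝ c x : ℝ) = inner ℝ c' x + inner ℝ (c - c') x := by
        rw [inner_sub_left]; ring
      rw [this]
      have h1 : (inner ℝ c' x : ℝ) ≤ h c' := hub c' x hxF
      have h2 : (inner ℝ (c - c') x : ℝ) ≤ ‖c - c'‖ * ‖x‖ := real_inner_le_norm _ _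
      have h3 : ‖c - c'‖ * ‖x‖ ≤ ‖c - c'‖ * R :=
        mul_le_mul_of_nonneg_left (hR x hxF) (norm_nonneg _)
      nlinarith
    refine LipschitzWith.of_dist_le_mul fun c c' => ?_
    rw [Real.dist_eq, abs_sub_le_iff]
    constructor
    · have := key c c'; rw [dist_eq_norm]
      rw [Real.coe_toNNReal _ hR0]; linarith
    · have := key c' c; rw [dist_eq_norm, ← norm_neg, neg_sub]
      rw [Real.coe_toNNReal _ hR0]; linarith
  -- differentiability at c implies unique maximizer
  have main : ∀ c : EuclideanSpace ℝ (Fin n), DifferentiableAt ℝ h c →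
      ∃! x, x ∈ F ∧ ∀ y ∈ F, (inner ℝ c y : ℝ) ≤ inner ℝ c x := by
    intro c hd
    obtain ⟨x, hxF, hx, hcx⟩ := hmax c
    refine ⟨x, ⟨hxF, hx⟩, ?_⟩
    rintro z ⟨hzF, hz⟩
    -- key: for any maximizer w and any v, inner v w = fderiv ℝ h c v
    have key : ∀ w, w ∈ F → (∀ y ∈ F, (inner ℝ c y : ℝ) ≤ inner ℝ c w) →
        ∀ v : EuclideanSpace ℝ (Fin n), (inner ℝ v w : ℝ) = fderiv ℝ h c v := by
      intro w hwF hw v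
      have hcw : h c = inner ℝ c w := by
        obtain ⟨u, huF, hu, hcu⟩ := hmax c
        rw [hcu]
        exact le_antisymm (hw u huF) (hu w hwF)
      set ψ : ℝ → ℝ := fun t => h (c + t • v) - t * (inner ℝ v w : ℝ) with hψ
      have hline : HasDerivAt (fun t : ℝ => c + t • v) v 0 := by
        simpa using ((hasDerivAt_id (0:ℝ)).smul_const v).const_add c
      have hφ : HasDerivAt (fun t : ℝ => h (c + t • v)) (fderiv ℝ h c v) 0 := by
        have hfd : HasFDerivAt h (fderiv ℝ h c) (c + (0:ℝ) • v) := by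
          simpa using hd.hasFDerivAt
        exact hfd.comp_hasDerivAt (0:ℝ) hline
      have hψd : HasDerivAt ψ (fderiv ℝ h c v - inner ℝ v w) 0 :=
        hφ.sub (hasDerivAt_mul_const _)
      have hmin : IsLocalMin ψ 0 := by
        apply Filter.Eventually.of_forall
        intro t
        have h1 : (inner ℝ (c + t • v) w : ℝ) ≤ h (c + t • v) := hub _ w hwF
        have h2 : (inner ℝ (c + t • v) w : ℝ) = inner ℝ c w + t * inner ℝ v w := by
          rw [inner_add_left, real_inner_smul_left]
        simp only [hψ]
        rw [zero_smul, add_zero, zero_mul, sub_zero, hcw]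
        linarith [h2 ▸ h1]
      have := hmin.hasDerivAt_eq_zero hψd
      linarith [this]
    have : ∀ v : EuclideanSpace ℝ (Fin n), (inner ℝ v z : ℝ) = inner ℝ v x := by
      intro v; rw [key z hzF hz v, key x hxF hx v]
    have h0 : (inner ℝ (z - x) (z - x) : ℝ) = 0 := by
      rw [inner_sub_right, this (z - x), sub_self]
    exact sub_eq_zero.1 (inner_self_eq_zero.1 h0)
  have hnull : volume {c : EuclideanSpace ℝ (Fin n) | ¬ DifferentiableAt ℝ h c} = 0 := by
    have := hlip.ae_differentiableAt (μ := volume)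
    rwa [ae_iff] at this
  refine measure_mono_null ?_ hnull
  intro c hc
  simp only [Set.mem_compl_iff, Set.mem_setOf_eq] at hc ⊢
  exact fun hdiff => hc (main c hdiff)
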